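/- Let x* = γ e_j be the minimizer of J(x) = ½‖P x − P e_j‖₂² + α‖W x‖₁ with γ = 1 − α/[W⁻¹ P e_j]_j, 0 < α < [W⁻¹ P e_j]_j. Then for every y ∈ ℝⁿ with y not a scalar multiple of e_j, J(y) > J(x*). -/

import Mathlib

open Matrix Finset

noncomputable def enorm₂ {n : ℕ} (v : Fin n → ℝ) : ℝ := Real.sqrt (∑ i, v i ^ 2)

noncomputable def wInvP {n : ℕ} (P : Matrix (Fin n) (Fin n) ℝ) (j i : Fin n) : ℝ :=
  P.mulVec (Pi.single j 1) i / enorm₂ (P.mulVec (Pi.single i 1))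

noncomputable def Jfun {n : ℕ} (P : Matrix (Fin n) (Fin n) ℝ) (j : Fin n) (α : ℝ)
    (x : Fin n → ℝ) : ℝ :=
  (1 / 2) * ∑ k, (P.mulVec x k - P.mulVec (Pi.single j 1) k) ^ 2 +
    α * ∑ i, enorm₂ (P.mulVec (Pi.single i 1)) * |x i|

theorem strictCS {n : ℕ} (u v : Fin n → ℝ) (hu : u ≠ 0) (h : ∀ c : ℝ, v ≠ c • u) :
    |∑ k, u k * v k| < Real.sqrt (∑ k, u k ^ 2) * Real.sqrt (∑ k, v k ^ 2) := by
  set U : EuclideanSpace ℝ (Fin n) := (WithLp.equiv 2 _).symm u with hUdef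
  set V : EuclideanSpace ℝ (Fin n) := (WithLp.equiv 2 _).symm v with hVdef
  have hU0 : U ≠ 0 := by simpa [hUdef] using hu
  have hnU0 : ‖U‖ ≠ 0 := norm_ne_zero_iff.2 hU0
  have hnU : ‖U‖ = Real.sqrt (∑ k, u k ^ 2) := by
    rw [EuclideanSpace.norm_eq]; simp [hUdef, Real.norm_eq_abs, sq_abs]
  have hnV : ‖V‖ = Real.sqrt (∑ k, v k ^ 2) := by
    rw [EuclideanSpace.norm_eq]; simp [hVdef, Real.norm_eq_abs, sq_abs]
  have hiUV : (inner ℝ U V : ℝ) = ∑ k, u k * v k := by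
    simp [hUdef, hVdef, PiLp.inner_apply, RCLike.inner_apply, mul_comm]
  rw [← hiUV, ← hnU, ← hnV, abs_lt]
  constructor
  · have := (inner_lt_norm_mul_iff_real (x := U) (y := -V)).2 ?_
    · rw [inner_neg_right, norm_neg] at this; linarith
    · rw [norm_neg]
      intro hc
      apply h (-(‖V‖ / ‖U‖))
      have h2 : (‖U‖⁻¹ * ‖V‖) • U = -V := by
        rw [← smul_smul, hc, smul_smul, inv_mul_cancel₀ hnU0, one_smul]
      have h3 : V = (-(‖V‖ / ‖U‖)) • U := by
        rw [neg_smul, div_eq_mul_inv, mul_comm, h2, neg_neg]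
      have := congrArg (WithLp.equiv 2 (Fin n → ℝ)) h3
      simpa [hVdef, hUdef] using this
  · have := (inner_lt_norm_mul_iff_real (x := U) (y := V)).2 ?_
    · linarith
    · intro hc
      apply h (‖V‖ / ‖U‖)
      have h2 : (‖U‖⁻¹ * ‖V‖) • U = V := by
        rw [← smul_smul, hc, smul_smul, inv_mul_cancel₀ hnU0, one_smul]
      have h3 : V = (‖V‖ / ‖U‖) • U := by
        rw [div_eq_mul_inv, mul_comm, h2]
      have := congrArg (WithLp.equiv 2 (Fin n → ℝ)) h3
      simpa [hVdef, hUdef] using this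

theorem sumsq {n : ℕ} (f g : Fin n → ℝ) :
    ∑ k, (f k - g k) ^ 2 = ∑ k, (f k) ^ 2 - 2 * ∑ k, f k * g k + ∑ k, (g k) ^ 2 := by
  rw [Finset.mul_sum, ← Finset.sum_sub_distrib, ← Finset.sum_add_distrib]
  apply Finset.sum_congr rfl
  intros; ring

set_option maxHeartbeats 1000000 in
/-- With `γ = 1 − α/[W⁻¹ P e_j]_j`, `0 < α < [W⁻¹ P e_j]_j`, for every `y` which is
not a scalar multiple of `e_j`, `J(y) > J(γ • e_j)`. -/
theorem strict_decrease_off_axis {n : ℕ}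
    (P : Matrix (Fin n) (Fin n) ℝ) (hsymm : Pᵀ = P) (hidem : P * P = P)
    (hnz : ∀ i : Fin n, P.mulVec (Pi.single i 1) ≠ 0)
    (j : Fin n)
    (hpar : ∀ i : Fin n, i ≠ j → ∀ c : ℝ,
      P.mulVec (Pi.single j 1) ≠ c • P.mulVec (Pi.single i 1))
    (α : ℝ) (hα0 : 0 < α) (hα1 : α < wInvP P j j) :
    ∀ y : Fin n → ℝ, (∀ c : ℝ, y ≠ c • (Pi.single j 1 : Fin n → ℝ)) →
      Jfun P j α ((1 - α / wInvP P j j) • (Pi.single j 1 : Fin n → ℝ)) < Jfun P j α y := by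
  intro y hy
  have hcol : ∀ i : Fin n, P.mulVec (Pi.single i 1) = fun k => P k i := by
    intro i; ext k; simp [Matrix.mulVec_single]
  set w : Fin n → ℝ := fun i => enorm₂ (P.mulVec (Pi.single i 1)) with hwdef
  have hwe : ∀ i, enorm₂ (P.mulVec (Pi.single i 1)) = w i := fun i => rfl
  have hw : ∀ i, w i = Real.sqrt (∑ k, P k i ^ 2) := by
    intro i; rw [← hwe, hcol]; rfl
  have hPsym : ∀ k l, P k l = P l k := by
    intro k l
    conv_lhs => rw [← hsymm]
    simp [Matrix.transpose_apply]
  have hC : ∀ i i' : Fin n, ∑ k, P k i * P k i' = P i i' := by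
    intro i i'
    have : (P * P) i i' = P i i' := by rw [hidem]
    rw [← this, Matrix.mul_apply]
    apply Finset.sum_congr rfl
    intro k _; rw [hPsym k i]
  have hwpos : ∀ i, 0 < w i := by
    intro i
    rw [hw]
    apply Real.sqrt_pos.2
    have hne : ∃ k, P k i ≠ 0 := by
      by_contra hall
      push_neg at hall
      exact hnz i (by rw [hcol]; ext k; exact hall k)
    obtain ⟨k0, hk0⟩ := hne
    exact Finset.sum_pos' (fun k _ => sq_nonneg _) ⟨k0, Finset.mem_univ _, by positivity⟩
  have hwsq : ∀ i, w i ^ 2 = P i i := by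
    intro i
    rw [hw, Real.sq_sqrt (Finset.sum_nonneg fun k _ => sq_nonneg _), ← hC i i]
    apply Finset.sum_congr rfl
    intros; ring
  have hwj0 : (w j) ≠ 0 := ne_of_gt (hwpos j)
  -- strict CS
  have hE : ∀ i : Fin n, i ≠ j → |P i j| < w i * w j := by
    intro i hij
    have hu : (fun k => P k i) ≠ 0 := by rw [← hcol]; exact hnz i
    have hpar' : ∀ c : ℝ, (fun k => P k j) ≠ c • (fun k => P k i) := by
      intro c; rw [← hcol, ← hcol]; exact hpar i hij c
    have := strictCS (fun k => P k i) (fun k => P k j) hu hpar'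
    rw [hC i j] at this
    rw [hw i, hw j]
    exact this
  -- wInvP P j j = w j
  have hnumj : P.mulVec (Pi.single j 1) j = P j j := by rw [hcol]
  have hwinv : wInvP P j j = w j := by
    rw [wInvP, hnumj, hwe j, ← hwsq j, sq, mul_div_assoc, div_self hwj0, mul_one]
  rw [hwinv] at hα1 ⊢
  set γ : ℝ := 1 - α / w j with hγdef
  have hγw : (γ - 1) * w j = -α := by rw [hγdef]; field_simp; ring
  have hγpos : 0 < γ := by
    rw [hγdef]
    have : α / w j < 1 := (div_lt_one (hwpos j)).2 hα1
    linarith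
  -- compute J(x*)
  have hmul_xstar : P.mulVec (γ • (Pi.single j 1 : Fin n → ℝ)) = fun k => γ * P k j := by
    rw [Matrix.mulVec_smul, hcol]
    ext k; simp
  have hl1_xstar : ∑ i, w i * |(γ • (Pi.single j 1 : Fin n → ℝ)) i| = w j * γ := by
    rw [Finset.sum_eq_single j]
    · simp [abs_of_pos hγpos]
    · intro i _ hij
      simp [Pi.single_eq_of_ne hij]
    · intro h; exact absurd (Finset.mem_univ j) h
  have hJx : Jfun P j α (γ • (Pi.single j 1 : Fin n → ℝ))
      = (1/2) * ((γ - 1)^2 * ∑ k, (P k j)^2) + α * (w j * γ) := by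
    rw [Jfun, hmul_xstar]
    simp only [hwe]
    rw [hl1_xstar]
    congr 1
    simp only [hcol]
    rw [mul_eq_mul_left_iff]
    left
    rw [Finset.mul_sum]
    apply Finset.sum_congr rfl
    intros; ring
  -- sums for y
  set A : ℝ := ∑ k, (P.mulVec y k)^2 with hAdef
  set B : ℝ := ∑ l, y l * P l j with hBdef
  set C : ℝ := ∑ k, (P k j)^2 with hCdef
  set S : ℝ := ∑ i, w i * |y i| with hSdef
  have hCw : C = w j ^ 2 := by
    rw [hwsq, hCdef, ← hC j j]
    apply Finset.sum_congr rfl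
    intros; ring
  have hB : ∑ k, P.mulVec y k * P k j = B := by
    rw [hBdef]
    have hstep : ∀ k, P.mulVec y k * P k j = ∑ l, P k l * y l * P k j := by
      intro k; rw [Matrix.mulVec, dotProduct, Finset.sum_mul]
    rw [Finset.sum_congr rfl (fun k _ => hstep k), Finset.sum_comm]
    apply Finset.sum_congr rfl
    intro l _
    rw [← hC l j, Finset.mul_sum]
    apply Finset.sum_congr rfl
    intro k _; ring
  have hJy : Jfun P j α y = (1/2) * (A - 2*B + C) + α * S := by
    rw [Jfun]
    simp only [hwe]
    simp only [hcol]
    rw [sumsq, hB]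
  have hQ : ∑ k, (P.mulVec y k - γ * P k j)^2 = A - 2*γ*B + γ^2*C := by
    rw [sumsq]
    have h1 : ∑ k, P.mulVec y k * (γ * P k j) = γ * B := by
      rw [← hB, Finset.mul_sum]
      apply Finset.sum_congr rfl
      intros; ring
    have h2 : ∑ k, (γ * P k j)^2 = γ^2 * C := by
      rw [hCdef, Finset.mul_sum]
      apply Finset.sum_congr rfl
      intros; ring
    rw [h1, h2]
    ring
  have hQnn : (0:ℝ) ≤ ∑ k, (P.mulVec y k - γ * P k j)^2 :=
    Finset.sum_nonneg fun k _ => sq_nonneg _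
  -- the linear terms
  set g : Fin n → ℝ := fun l => (γ - 1) * y l * P l j + α * (w l * |y l|) with hgdef
  have hGsum : ∑ l, g l = (γ - 1) * B + α * S := by
    rw [hgdef, hBdef, hSdef, Finset.sum_add_distrib, Finset.mul_sum, Finset.mul_sum]
    congr 1
    apply Finset.sum_congr rfl
    intros; ring
  -- key identity
  have hKey : Jfun P j α y = Jfun P j α (γ • (Pi.single j 1 : Fin n → ℝ))
      + (1/2) * (∑ k, (P.mulVec y k - γ * P k j)^2) + ∑ l, g l := by
    rw [hJy, hJx, hGsum, hQ, hCw]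
    linear_combination (-(γ * w j)) * hγw
  -- bound for off-axis terms
  have hwg : ∀ l, l ≠ j → α * |y l| * (w l * w j - |P l j|) ≤ w j * g l := by
    intro l hl
    have hshow : w j * g l = w j * ((γ - 1) * y l * P l j) + α * (w l * |y l|) * w j := by
      rw [hgdef]; ring
    have h1 : w j * ((γ - 1) * y l * P l j) = -α * (y l * P l j) := by
      linear_combination (y l * P l j) * hγw
    have h2 : y l * P l j ≤ |y l| * |P l j| := by
      calc y l * P l j ≤ |y l * P l j| := le_abs_self _
      _ = |y l| * |P l j| := abs_mul _ _
    have h3 := mul_le_mul_of_nonneg_left h2 hα0.le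
    rw [hshow, h1]
    nlinarith
  have hgnn : ∀ l, 0 ≤ g l := by
    intro l
    by_cases hl : l = j
    · subst hl
      show 0 ≤ (γ - 1) * y l * P l l + α * (w l * |y l|)
      have h1 : (γ - 1) * y l * P l l = -α * (y l * w l) := by
        rw [← hwsq l]
        linear_combination (y l * w l) * hγw
      rw [h1]
      nlinarith [mul_nonneg (mul_nonneg hα0.le (hwpos l).le)
        (sub_nonneg.2 (le_abs_self (y l)))]
    · have h1 := hwg l hl
      have h2 : 0 ≤ α * |y l| * (w l * w j - |P l j|) := by
        apply mul_nonneg (mul_nonneg hα0.le (abs_nonneg _))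
        exact sub_nonneg.2 (hE l hl).le
      nlinarith [hwpos j]
  -- strict positivity at some coordinate
  have hex : ∃ l, l ≠ j ∧ y l ≠ 0 := by
    by_contra hall
    push_neg at hall
    apply hy (y j)
    ext l
    by_cases hl : l = j
    · subst hl; simp
    · rw [hall l hl]; simp [Pi.single_eq_of_ne hl]
  obtain ⟨l0, hl0j, hl00⟩ := hex
  have hgpos : 0 < g l0 := by
    have h1 := hwg l0 hl0j
    have h2 : 0 < α * |y l0| * (w l0 * w j - |P l0 j|) := by
      apply mul_pos (mul_pos hα0 (abs_pos.2 hl00))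
      exact sub_pos.2 (hE l0 hl0j)
    nlinarith [hwpos j]
  have hGpos : 0 < ∑ l, g l :=
    Finset.sum_pos' (fun l _ => hgnn l) ⟨l0, Finset.mem_univ _, hgpos⟩
  rw [hKey]
  linarith
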